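/- The map w ↦ code(w) is a bijection from the set of 132-avoiding permutations in S_n onto the set C_n of partitions μ = (μ_1 ≥ ⋯ ≥ μ_n ≥ 0) with μ_i ≤ n − i for all i. -/

import Mathlib

open Finset

/-- The code of a permutation: `c_i(w) = #{j > i : w_j < w_i}`. -/
def code {n : ℕ} (w : Equiv.Perm (Fin n)) (i : Fin n) : ℕ :=
  (Finset.univ.filter fun j => i < j ∧ w j < w i).card

/-- `w` is 132-avoiding: no indices `i < j < k` with `w i < w k < w j`. -/
def Avoids132 {n : ℕ} (w : Equiv.Perm (Fin n)) : Prop :=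
  ¬ ∃ i j k : Fin n, i < j ∧ j < k ∧ w i < w k ∧ w k < w j

lemma code_le {n : ℕ} (w : Equiv.Perm (Fin n)) (i : Fin n) :
    code w i ≤ n - 1 - (i : ℕ) := by
  classical
  calc code w i ≤ #(Finset.Ioi i) := by
        apply Finset.card_le_card
        intro j hj
        simp only [Finset.mem_filter] at hj
        simpa using hj.2.1
    _ = n - 1 - (i : ℕ) := Fin.card_Ioi i

lemma code_anti {n : ℕ} (w : Equiv.Perm (Fin n)) (hw : Avoids132 w)
    {i j : Fin n} (hij : i ≤ j) : code w j ≤ code w i := by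
  classical
  rcases eq_or_lt_of_le hij with rfl | hij
  · exact le_rfl
  apply Finset.card_le_card
  intro t ht
  simp only [Finset.mem_filter, Finset.mem_univ, true_and] at ht ⊢
  obtain ⟨htj, htw⟩ := ht
  refine ⟨hij.trans htj, ?_⟩
  rcases lt_trichotomy (w t) (w i) with h | h | h
  · exact h
  · exact absurd (w.injective h) (by rintro rfl; exact absurd htj (lt_asymm hij))
  · exact absurd ⟨i, j, t, hij, htj, h, htw⟩ hw

lemma avoids_of_anti {n : ℕ} (w : Equiv.Perm (Fin n))
    (h : ∀ i j : Fin n, i ≤ j → code w j ≤ code w i) : Avoids132 w := by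
  classical
  rintro ⟨i, j, k, hij, hjk, h1, h2⟩
  set S := Finset.univ.filter (fun t : Fin n => t < j ∧ w t < w k) with hS
  have hne : S.Nonempty := ⟨i, by simp [hS, hij, h1]⟩
  set m := S.max' hne with hm'
  have hm : m < j ∧ w m < w k := (Finset.mem_filter.1 (S.max'_mem hne)).2
  have hmax : ∀ t : Fin n, t < j → w t < w k → t ≤ m := fun t h1 h2 =>
    S.le_max' t (by simp [hS, h1, h2])
  have hsub : (Finset.univ.filter fun t => m < t ∧ w t < w m)
      ⊆ (Finset.univ.filter fun t => j < t ∧ w t < w j).erase k := by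
    intro t ht
    simp only [Finset.mem_filter, Finset.mem_univ, true_and] at ht
    obtain ⟨hmt, htm⟩ := ht
    have htk : w t < w k := htm.trans hm.2
    have hjt : j < t := by
      rcases lt_trichotomy t j with h' | rfl | h'
      · exact absurd (hmax t h' htk) (not_le.2 hmt)
      · exact absurd (htk.trans h2) (lt_irrefl _)
      · exact h'
    refine Finset.mem_erase.2 ⟨?_, by simp [hjt, htm.trans (hm.2.trans h2)]⟩
    rintro rfl
    exact absurd htk (lt_irrefl _)
  have hk : k ∈ (Finset.univ.filter fun t => j < t ∧ w t < w j) := by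
    simp [hjk, h2]
  have hlt : code w m < code w j := by
    have h1' := Finset.card_le_card hsub
    have h2' := Finset.card_erase_of_mem hk
    have h3' := Finset.card_pos.2 ⟨k, hk⟩
    unfold code
    omega
  exact absurd (h m j (le_of_lt hm.1)) (not_le.2 hlt)

lemma card_lt_val {n : ℕ} (w : Equiv.Perm (Fin n)) (v : Fin n) :
    (Finset.univ.filter fun j => w j < v).card = (v : ℕ) := by
  classical
  rw [← Fin.card_Iio v]
  apply Finset.card_bij (fun j _ => w j)
  · intro a ha; simp only [Finset.mem_filter] at ha; simpa using ha.2
  · intro a ha b hb hab; exact w.injective hab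
  · intro b hb
    refine ⟨w.symm b, ?_, by simp⟩
    simp only [Finset.mem_filter, Finset.mem_univ, true_and, Equiv.apply_symm_apply]
    simpa using hb

lemma val_eq_code_add {n : ℕ} (w : Equiv.Perm (Fin n)) (i : Fin n) :
    (w i : ℕ) = code w i + (Finset.univ.filter fun j => j < i ∧ w j < w i).card := by
  classical
  rw [← card_lt_val w (w i), code, ← Finset.card_union_of_disjoint ?_]
  · congr 1
    ext j
    simp only [Finset.mem_filter, Finset.mem_univ, true_and, Finset.mem_union]
    constructor
    · intro hj
      rcases lt_trichotomy i j with h | rfl | h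
      · exact Or.inl ⟨h, hj⟩
      · exact absurd hj (lt_irrefl _)
      · exact Or.inr ⟨h, hj⟩
    · rintro (⟨_, hj⟩ | ⟨_, hj⟩) <;> exact hj
  · rw [Finset.disjoint_left]
    intro a ha hb
    simp only [Finset.mem_filter] at ha hb
    exact absurd (ha.2.1.trans hb.2.1) (lt_irrefl _)

lemma code_step {n : ℕ} (w w' : Equiv.Perm (Fin n)) (h : code w = code w') (i : Fin n)
    (hprev : ∀ j : Fin n, j < i → w j = w' j) : w i ≤ w' i := by
  classical
  by_contra hlt
  push_neg at hlt
  set a := w' i with ha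
  set b := w i with hb
  have e1 := val_eq_code_add w i
  have e2 := val_eq_code_add w' i
  rw [← h] at e2
  have hfe : (Finset.univ.filter fun j => j < i ∧ w' j < w' i)
      = (Finset.univ.filter fun j => j < i ∧ w j < a) := by
    apply Finset.filter_congr
    intro j _
    constructor
    · rintro ⟨hj, hj2⟩; exact ⟨hj, (hprev j hj) ▸ hj2⟩
    · rintro ⟨hj, hj2⟩; exact ⟨hj, (hprev j hj) ▸ hj2⟩
  rw [hfe] at e2
  set B' := Finset.univ.filter fun j => j < i ∧ w j < a with hB'
  set B := Finset.univ.filter fun j => j < i ∧ w j < b with hB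
  have hsub : B' ⊆ B := by
    intro j hj
    simp only [hB', hB, Finset.mem_filter] at hj ⊢
    exact ⟨hj.1, hj.2.1, hj.2.2.trans hlt⟩
  have hcard : (B \ B').card ≤ ((Finset.Ioo a b : Finset (Fin n))).card := by
    apply Finset.card_le_card_of_injOn (fun j => w j)
    · intro j hj
      simp only [Finset.mem_coe, hB, hB', Finset.mem_sdiff, Finset.mem_filter, Finset.mem_univ, true_and,
        not_and] at hj
      obtain ⟨⟨hji, hjb⟩, hna⟩ := hj
      have hja : ¬ w j < a := fun hc => hna hji hc
      have : a < w j := by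
        rcases lt_trichotomy (w j) a with h' | h' | h'
        · exact absurd h' hja
        · exfalso
          have : w' j = w' i := by rw [← hprev j hji, h']
          exact absurd (w'.injective this) (ne_of_lt hji)
        · exact h'
      simpa using Finset.mem_Ioo.2 ⟨this, hjb⟩
    · intro x _ y _ hxy; exact w.injective hxy
  rw [Finset.card_sdiff, Finset.inter_eq_left.2 hsub] at hcard
  rw [Fin.card_Ioo] at hcard
  have hab : (a : ℕ) < (b : ℕ) := hlt
  omega

lemma code_injective {n : ℕ} : Function.Injective (fun w : Equiv.Perm (Fin n) => code w) := by
  intro w w' h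
  simp only at h
  have key : ∀ m : ℕ, ∀ i : Fin n, (i : ℕ) = m → w i = w' i := by
    intro m
    induction m using Nat.strong_induction_on with
    | _ m ih =>
      intro i him
      have hprev : ∀ j : Fin n, j < i → w j = w' j := fun j hj =>
        ih (j : ℕ) (him ▸ hj) j rfl
      have hprev' : ∀ j : Fin n, j < i → w' j = w j := fun j hj => (hprev j hj).symm
      exact le_antisymm (code_step w w' h i hprev) (code_step w' w h.symm i hprev')
  exact Equiv.ext fun i => key (i : ℕ) i rfl

lemma succAbove_lt_iff' {n : ℕ} (p : Fin (n + 1)) (x : Fin n) :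
    p.succAbove x < p ↔ (x : ℕ) < (p : ℕ) := by
  rcases lt_or_ge (x.castSucc) p with h | h
  · rw [Fin.succAbove_of_castSucc_lt _ _ h]
    simp only [Fin.lt_def, Fin.coe_castSucc] at h ⊢
  · rw [Fin.succAbove_of_le_castSucc _ _ h]
    simp only [Fin.le_def, Fin.lt_def, Fin.coe_castSucc, Fin.val_succ] at h ⊢
    omega

lemma card_val_lt {n m : ℕ} (hm : m ≤ n) :
    (Finset.univ.filter fun v : Fin n => (v : ℕ) < m).card = m := by
  classical
  have key : (Finset.univ.filter fun v : Fin n => (v : ℕ) < m).card = (Finset.range m).card := by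
    refine Finset.card_bij (fun v _ => (v : ℕ)) ?_ ?_ ?_
    · intro a ha; simp only [Finset.mem_filter] at ha; simpa using ha.2
    · intro a _ b _ hab; exact Fin.val_injective hab
    · intro b hb
      simp only [Finset.mem_range] at hb
      exact ⟨⟨b, lt_of_lt_of_le hb hm⟩, by simp [hb], rfl⟩
  rw [key, Finset.card_range]

lemma filter_perm_card {n : ℕ} (e : Equiv.Perm (Fin n)) (q : Fin n → Prop) [DecidablePred q] :
    (Finset.univ.filter fun i => q (e i)).card = (Finset.univ.filter q).card := by
  apply Finset.card_bij (fun i _ => e i)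
  · intro a ha; simp only [Finset.mem_filter] at ha ⊢; exact ⟨Finset.mem_univ _, ha.2⟩
  · intro a _ b _ hab; exact e.injective hab
  · intro b hb
    refine ⟨e.symm b, ?_, by simp⟩
    simp only [Finset.mem_filter, Finset.mem_univ, true_and, Equiv.apply_symm_apply]
    exact (Finset.mem_filter.1 hb).2

lemma code_surj : ∀ (n : ℕ) (μ : Fin n → ℕ), (∀ i : Fin n, μ i ≤ n - 1 - (i : ℕ)) →
    ∃ w : Equiv.Perm (Fin n), code w = μ := by
  intro n
  induction n with
  | zero => exact fun μ _ => ⟨1, funext fun i => i.elim0⟩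
  | succ n ih =>
    intro μ hμ
    obtain ⟨e, he⟩ := ih (fun i => μ i.succ) (fun i => by
      show μ i.succ ≤ n - 1 - (i : ℕ)
      have := hμ i.succ
      simp only [Fin.val_succ] at this
      omega)
    have hμ0 : μ 0 ≤ n := by have := hμ 0; simpa using this
    set p : Fin (n + 1) := ⟨μ 0, by omega⟩ with hp
    set w : Equiv.Perm (Fin (n + 1)) :=
      (finSuccEquiv n).trans (e.optionCongr.trans (finSuccEquiv' p).symm) with hwdef
    have hw0 : w 0 = p := by simp [hwdef]
    have hws : ∀ i : Fin n, w i.succ = p.succAbove (e i) := fun i => by simp [hwdef]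
    refine ⟨w, funext fun i => ?_⟩
    induction i using Fin.cases with
    | zero =>
      have himg : (Finset.univ.filter fun j : Fin (n+1) => (0 : Fin (n+1)) < j ∧ w j < w 0)
          = (Finset.univ.filter fun i : Fin n => (e i : ℕ) < μ 0).image Fin.succ := by
        ext j
        simp only [Finset.mem_filter, Finset.mem_univ, true_and, Finset.mem_image]
        constructor
        · rintro ⟨hj0, hjw⟩
          obtain ⟨k, rfl⟩ := Fin.exists_succ_eq.2 (Fin.pos_iff_ne_zero.1 hj0)
          refine ⟨k, ?_, rfl⟩
          rw [hws, hw0] at hjw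
          simpa [hp] using (succAbove_lt_iff' p (e k)).1 hjw
        · rintro ⟨k, hk, rfl⟩
          refine ⟨Fin.succ_pos k, ?_⟩
          rw [hws, hw0]
          exact (succAbove_lt_iff' p (e k)).2 (by simpa [hp] using hk)
      rw [code, himg, Finset.card_image_of_injective _ (Fin.succ_injective n)]
      rw [filter_perm_card e (fun v => (v : ℕ) < μ 0), card_val_lt hμ0]
    | succ i =>
      have himg : (Finset.univ.filter fun j : Fin (n+1) => i.succ < j ∧ w j < w i.succ)
          = (Finset.univ.filter fun k : Fin n => i < k ∧ e k < e i).image Fin.succ := by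
        ext j
        simp only [Finset.mem_filter, Finset.mem_univ, true_and, Finset.mem_image]
        constructor
        · rintro ⟨hj0, hjw⟩
          have : j ≠ 0 := Fin.pos_iff_ne_zero.1 ((Fin.succ_pos i).trans hj0)
          obtain ⟨k, rfl⟩ := Fin.exists_succ_eq.2 this
          rw [hws, hws] at hjw
          exact ⟨k, ⟨Fin.succ_lt_succ_iff.1 hj0, (Fin.succAbove_lt_succAbove_iff).1 hjw⟩, rfl⟩
        · rintro ⟨k, ⟨hk1, hk2⟩, rfl⟩
          rw [hws, hws]
          exact ⟨Fin.succ_lt_succ_iff.2 hk1, (Fin.succAbove_lt_succAbove_iff).2 hk2⟩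
      rw [code, himg, Finset.card_image_of_injective _ (Fin.succ_injective n)]
      have := congrFun he i
      rw [code] at this
      exact this

theorem stmt4 (n : ℕ) :
    Set.BijOn (fun w : Equiv.Perm (Fin n) => code w)
      {w | Avoids132 w}
      {μ : Fin n → ℕ |
        (∀ i j : Fin n, i ≤ j → μ j ≤ μ i) ∧ ∀ i : Fin n, μ i ≤ n - 1 - (i : ℕ)} := by
  refine ⟨?_, ?_, ?_⟩
  · intro w hw
    exact ⟨fun i j hij => code_anti w hw hij, fun i => code_le w i⟩
  · intro w _ w' _ h
    exact code_injective h
  · rintro μ ⟨hanti, hbd⟩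
    obtain ⟨w, hw⟩ := code_surj n μ hbd
    refine ⟨w, ?_, hw⟩
    apply avoids_of_anti
    intro i j hij
    rw [hw]
    exact hanti i j hij
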